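/- Let g ∈ L²(ℝ, γ) have Hermite expansion g = Σ_{m≥0} c_m H_m, and define T_k(g) = Σ_{m≥k} c_m H_{m-k}. Then for any integers k, l ≥ 1, the l-th derivative of T_k(g) satisfies (T_k g)^{(l)} = Σ_{i=0}^{l} C(l,i) α_{k,i} T_{k+i}(g^{(l-i)}), where α_{k,i} = (-1)^i k(k+1)⋯(k+i-1) (with α_{k,0} = 1), whenever all terms are well defined in L²(ℝ,γ). -/
import Mathlib


open Polynomial

private lemma hermite_deriv_succ : ∀ n : ℕ, derivative (hermite (n+1)) = (n+1) • hermite n := by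
  intro n
  induction n with
  | zero => simp [hermite_one, hermite_zero]
  | succ n ih =>
    rw [hermite_succ (n+1), derivative_sub, derivative_mul, derivative_X, one_mul, ih,
      derivative_smul, hermite_succ n]
    simp only [nsmul_eq_mul, Nat.cast_add, Nat.cast_one]
    ring

private lemma hermite_iterate_deriv (n : ℕ) : ∀ l : ℕ,
    derivative^[l] (hermite n) = (n.descFactorial l) • hermite (n - l) := by
  intro l
  induction l with
  | zero => simp
  | succ l ih =>
    rw [Function.iterate_succ_apply', ih, derivative_smul]
    rcases lt_or_ge l n with h | h
    · have h1 : n - l = (n - (l+1)) + 1 := by omega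
      have h2 : n - (l+1) + 1 = n - l := by omega
      rw [h1, hermite_deriv_succ, smul_smul, h2, Nat.descFactorial_succ, mul_comm]
    · have h1 : n - l = 0 := by omega
      have h2 : n.descFactorial (l+1) = 0 := Nat.descFactorial_eq_zero_iff_lt.mpr (by omega)
      rw [h1, h2, hermite_zero]
      simp

private lemma descPochhammer_vandermonde (x y : ℝ) : ∀ n : ℕ,
    (descPochhammer ℝ n).eval (x + y) =
      ∑ i ∈ Finset.range (n + 1), (n.choose i : ℝ) *
        ((descPochhammer ℝ i).eval x * (descPochhammer ℝ (n - i)).eval y) := by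
  intro n
  induction n with
  | zero => simp
  | succ n ih =>
    rw [descPochhammer_succ_eval, ih, Finset.sum_mul]
    have key : ∀ i ∈ Finset.range (n+1),
        (n.choose i : ℝ) * ((descPochhammer ℝ i).eval x * (descPochhammer ℝ (n-i)).eval y)
          * (x + y - n)
        = (n.choose i : ℝ) * ((descPochhammer ℝ (i+1)).eval x * (descPochhammer ℝ (n-i)).eval y)
          + (n.choose i : ℝ) * ((descPochhammer ℝ i).eval x * (descPochhammer ℝ (n+1-i)).eval y) := by
      intro i hi
      have hi' : i ≤ n := Nat.lt_succ_iff.mp (Finset.mem_range.mp hi)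
      have h1 : n + 1 - i = (n - i) + 1 := by omega
      rw [h1, descPochhammer_succ_eval, descPochhammer_succ_eval]
      rw [Nat.cast_sub hi']; ring
    rw [Finset.sum_congr rfl key, Finset.sum_add_distrib,
      Finset.sum_range_succ' _ (n+1)]
    have e1 : ∀ i, n + 1 - (i + 1) = n - i := fun i => by omega
    simp only [e1, Nat.choose_succ_succ, Nat.cast_add, add_mul, Nat.choose_zero_right,
      Nat.cast_one, one_mul]
    rw [Finset.sum_add_distrib]
    have e2 : ∑ i ∈ Finset.range (n+1),
        (n.choose i : ℝ) * ((descPochhammer ℝ i).eval x * (descPochhammer ℝ (n+1-i)).eval y)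
      = (∑ i ∈ Finset.range (n+1),
          (n.choose (i+1) : ℝ) * ((descPochhammer ℝ (i+1)).eval x * (descPochhammer ℝ (n-i)).eval y))
        + (descPochhammer ℝ 0).eval x * (descPochhammer ℝ (n+1)).eval y := by
      rw [Finset.sum_range_succ' _ n, Finset.sum_range_succ _ n]
      simp only [e1, Nat.choose_zero_right, Nat.cast_one, one_mul, Nat.sub_zero]
      have : (n.choose (n+1) : ℝ) = 0 := by
        rw [Nat.choose_succ_self]; norm_num
      rw [this]; ring
    rw [e2]
    simp only [Nat.sub_zero, Nat.succ_eq_add_one]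
    ring

private lemma desc_eval_neg (k i : ℕ) :
    (descPochhammer ℝ i).eval (-(k : ℝ)) = (-1 : ℝ) ^ i * (k.ascFactorial i : ℝ) := by
  have h := ascPochhammer_eval_neg_eq_descPochhammer (R := ℝ) (-(k : ℝ)) i
  have h2 : (ascPochhammer ℝ i).eval (k : ℝ) = (k.ascFactorial i : ℝ) := by
    rw [← ascPochhammer_nat_eq_ascFactorial, ascPochhammer_eval_cast]
  rw [neg_neg, h2] at h
  rw [h, ← mul_assoc, ← pow_add, Even.neg_one_pow ⟨i, rfl⟩, one_mul]

private lemma scalar_identity (m k l : ℕ) :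
    ((m + l).descFactorial l : ℝ) =
      ∑ i ∈ Finset.range (l + 1), (l.choose i : ℝ) *
        ((-1 : ℝ) ^ i * (k.ascFactorial i : ℝ)) * ((m + k + l).descFactorial (l - i) : ℝ) := by
  have h := descPochhammer_vandermonde (-(k:ℝ)) ((m + k + l : ℕ) : ℝ) l
  have hxy : -(k:ℝ) + ((m+k+l:ℕ):ℝ) = ((m+l : ℕ) : ℝ) := by push_cast; ring
  rw [hxy, descPochhammer_eval_eq_descFactorial] at h
  rw [h]
  refine Finset.sum_congr rfl fun i hi => ?_
  rw [desc_eval_neg, descPochhammer_eval_eq_descFactorial]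
  ring


/-- For `g = ∑ c_m H_m` and the `k`-fold Hermite shift
`T_k g = ∑ c_{m+k} H_m`, the `l`-th derivative satisfies
`(T_k g)^{(l)} = ∑_{i=0}^{l} C(l,i) α_{k,i} T_{k+i}(g^{(l-i)})`,
where `α_{k,i} = (-1)^i k(k+1)⋯(k+i-1)`.  The coefficient of `H_m` in
`T_{k+i}(g^{(l-i)})` is `c_{m+k+l} · (m+k+l)(m+k+l-1)⋯(m+k+i+1)
 = c_{m+k+l} · descFactorial (m+k+l) (l-i)`. -/
theorem hermite_shift_iteratedDeriv (c : ℕ → ℝ) (k l : ℕ) (hk : 1 ≤ k) (hl : 1 ≤ l)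
    (hterm : ∀ x : ℝ,
      iteratedDeriv l (fun y : ℝ => ∑' m : ℕ, c (m + k) * (aeval y (hermite m) : ℝ)) x
        = ∑' m : ℕ, c (m + k) * (aeval x ((Polynomial.derivative)^[l] (hermite m)) : ℝ))
    (hsum : ∀ i ≤ l, ∀ x : ℝ, Summable fun m : ℕ =>
      c (m + k + l) * ((m + k + l).descFactorial (l - i) : ℝ) * (aeval x (hermite m) : ℝ)) :
    ∀ x : ℝ, iteratedDeriv l (fun y : ℝ => ∑' m : ℕ, c (m + k) * (aeval y (hermite m) : ℝ)) x
      = ∑ i ∈ Finset.range (l + 1),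
          (l.choose i : ℝ) * ((-1 : ℝ) ^ i * (k.ascFactorial i : ℝ)) *
            ∑' m : ℕ, c (m + k + l) * ((m + k + l).descFactorial (l - i) : ℝ) *
              (aeval x (hermite m) : ℝ) := by

  intro x
  rw [hterm x]
  have step1 : ∀ m : ℕ, c (m + k) * (aeval x (derivative^[l] (hermite m)) : ℝ)
      = c (m + k) * ((m.descFactorial l : ℝ) * (aeval x (hermite (m - l)) : ℝ)) := by
    intro m
    rw [hermite_iterate_deriv m l]
    simp [nsmul_eq_mul]
  rw [tsum_congr step1]
  have hinj : Function.Injective (fun m : ℕ => m + l) := fun a b h => by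
    simpa using h
  have hsupp : Function.support
      (fun m : ℕ => c (m + k) * ((m.descFactorial l : ℝ) * (aeval x (hermite (m - l)) : ℝ)))
      ⊆ Set.range (fun m : ℕ => m + l) := by
    intro m hm
    rcases lt_or_ge m l with h | h
    · exact absurd (by simp [Nat.descFactorial_eq_zero_iff_lt.mpr h]) hm
    · exact ⟨m - l, by simp; omega⟩
  rw [← Function.Injective.tsum_eq hinj hsupp]
  simp only [Nat.add_sub_cancel]
  have step2 : ∀ m : ℕ, c (m + l + k) * (((m + l).descFactorial l : ℝ) * (aeval x (hermite m) : ℝ))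
      = ∑ i ∈ Finset.range (l + 1), (l.choose i : ℝ) * ((-1 : ℝ) ^ i * (k.ascFactorial i : ℝ)) *
          (c (m + k + l) * ((m + k + l).descFactorial (l - i) : ℝ) * (aeval x (hermite m) : ℝ)) := by
    intro m
    rw [show m + l + k = m + k + l from by omega, scalar_identity m k l,
      Finset.sum_mul, Finset.mul_sum]
    exact Finset.sum_congr rfl fun i _ => by ring
  rw [tsum_congr step2, Summable.tsum_finsetSum fun i hi =>
    ((hsum i (Nat.lt_succ_iff.mp (Finset.mem_range.mp hi)) x).mul_left _)]
  exact Finset.sum_congr rfl fun i _ => tsum_mul_left
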